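/- Breakdown point of posterior quantiles dominates the posterior breakdown point: Let ρ be a loss, π a prior, and suppose that for every sample X̃^n ∈ ℝ^n the location M-posterior π_n^ρ(·|F̃_n) is well defined with finite variance. For τ ∈ (0,1), let T_τ(X̃^n) := inf{t : ∫_{−∞}^{t} π_n^ρ(θ'|F̃_n)dθ' ≥ τ} be the left τ-quantile of the M-posterior. Then for every τ ∈ (0,1), ε*(T_τ, X^n) ≥ ε*_{W2}(π_n^ρ, X^n); that is, for every m ≤ n, if sup_{X̃∈B_H(X^n,m)} W_2(π_n^ρ(·|F̃_n), π_n^ρ(·|F_n)) < ∞, then sup_{X̃∈B_H(X^n,m)} |T_τ(X̃^n) − T_τ(X^n)| < ∞. -/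

import Mathlib

open MeasureTheory ENNReal

open MeasureTheory ENNReal

/-- Density of the location M-posterior on `ℝ` with loss `ρ`, prior density `w`, sample `Y`. -/
noncomputable def locPostDensity (ρ w : ℝ → ℝ) {n : ℕ} (Y : Fin n → ℝ) (θ : ℝ) : ℝ :=
  w θ * Real.exp (-∑ j, ρ (Y j - θ)) / ∫ t : ℝ, w t * Real.exp (-∑ j, ρ (Y j - t))

/-- The location M-posterior as a measure on `ℝ`. -/
noncomputable def locPostMeasure (ρ w : ℝ → ℝ) {n : ℕ} (Y : Fin n → ℝ) : Measure ℝ :=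
  MeasureTheory.volume.withDensity fun θ => ENNReal.ofReal (locPostDensity ρ w Y θ)

/-- The 2-Wasserstein distance between measures on `ℝ` (square root of the infimum over
couplings of `∫(x−y)²dγ`). -/
noncomputable def W2 (P Q : Measure ℝ) : ℝ≥0∞ :=
  (⨅ (γ : Measure (ℝ × ℝ)) (_ : γ.map Prod.fst = P ∧ γ.map Prod.snd = Q),
    ∫⁻ z, ENNReal.ofReal ((z.1 - z.2) ^ 2) ∂γ) ^ (1 / 2 : ℝ)

open scoped Classical in
/-- The set of samples differing from `X` in at most `m` entries. -/
noncomputable def hammingBall {α : Type*} {n : ℕ} (X : Fin n → α) (m : ℕ) :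
    Set (Fin n → α) :=
  {Y | (Finset.univ.filter fun i => Y i ≠ X i).card ≤ m}

/-- The worst-case 2-Wasserstein deviation of the M-posterior over samples corrupted in at
most `m` entries. -/
noncomputable def supW2 (ρ w : ℝ → ℝ) {n : ℕ} (X : Fin n → ℝ) (m : ℕ) : ℝ≥0∞ :=
  ⨆ Y ∈ hammingBall X m, W2 (locPostMeasure ρ w Y) (locPostMeasure ρ w X)

/-- The posterior breakdown point: the least fraction `m/n` of corrupted points driving the
M-posterior arbitrarily far in 2-Wasserstein distance. -/
noncomputable def breakdownPoint (ρ w : ℝ → ℝ) {n : ℕ} (X : Fin n → ℝ) : ℝ :=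
  sInf {r : ℝ | ∃ m : ℕ, m ≤ n ∧ r = (m : ℝ) / n ∧ supW2 ρ w X m = ⊤}

/-- The left `τ`-quantile of the location M-posterior. -/
noncomputable def postQuantile (ρ w : ℝ → ℝ) {n : ℕ} (τ : ℝ) (Y : Fin n → ℝ) : ℝ :=
  sInf {t : ℝ | τ ≤ ∫ θ in Set.Iic t, locPostDensity ρ w Y θ}

/-- **Breakdown point of posterior quantiles dominates the posterior breakdown point.**
If the location M-posterior is well defined with finite variance for every sample, then for
every `τ ∈ (0,1)` and every `m ≤ n`: if the worst-case 2-Wasserstein deviation of the posterior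
over `m`-corrupted samples is finite, so is the worst-case deviation of the posterior
`τ`-quantile; i.e. `ε*(T_τ,Xⁿ) ≥ ε*_{W₂}(π_n^ρ,Xⁿ)`. -/

lemma ofReal_max_zero' (a : ℝ) : ENNReal.ofReal (max a 0) = ENNReal.ofReal a := by
  rcases le_total a 0 with h | h
  · simp [max_eq_right h, ENNReal.ofReal_of_nonpos h]
  · rw [max_eq_left h]

lemma quantile_abs_le (f : ℝ → ℝ) (hf : Integrable f) (hf1 : (∫ x, f x) = 1)
    (τ : ℝ) (hτ : τ ∈ Set.Ioo (0:ℝ) 1) (B : ℝ≥0∞) (hB : B ≠ ⊤)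
    (hM : (∫⁻ x, ENNReal.ofReal (x ^ 2) ∂(MeasureTheory.volume.withDensity
      fun x => ENNReal.ofReal (f x))) ≤ B) :
    |sInf {t : ℝ | τ ≤ ∫ x in Set.Iic t, f x}|
      ≤ Real.sqrt (B.toReal / min τ (1 - τ)) + 1 := by
  obtain ⟨hτ0, hτ1⟩ := hτ
  set mt := min τ (1 - τ) with hmt
  have hmt0 : 0 < mt := lt_min hτ0 (by linarith)
  set r := B.toReal / mt with hr
  have hr0 : 0 ≤ r := div_nonneg ENNReal.toReal_nonneg hmt0.le
  set A := Real.sqrt r + 1 with hA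
  have hA0 : 0 < A := by positivity
  have hA2 : r < A ^ 2 := by
    have h1 : Real.sqrt r ^ 2 = r := Real.sq_sqrt hr0
    nlinarith [Real.sqrt_nonneg r]
  have hkey : B.toReal / A ^ 2 < mt := by
    rcases eq_or_lt_of_le (ENNReal.toReal_nonneg (a := B)) with h0 | h0
    · rw [← h0]
      simpa using hmt0
    · have hrpos : 0 < r := by rw [hr]; positivity
      have hlt : B.toReal / A ^ 2 < B.toReal / r :=
        div_lt_div_of_pos_left h0 hrpos hA2
      have heq : B.toReal / r = mt := by
        rw [hr, div_div_eq_mul_div, mul_comm, mul_div_assoc, div_self h0.ne', mul_one]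
      linarith
  set μ := MeasureTheory.volume.withDensity (fun x => ENNReal.ofReal (f x)) with hμ
  have hA2pos : (0:ℝ) < A ^ 2 := by positivity
  have hAtop : ENNReal.ofReal (A ^ 2) ≠ 0 := by
    simp [ENNReal.ofReal_eq_zero, not_le, hA2pos, hA0.ne']
  have hdivtop : B / ENNReal.ofReal (A ^ 2) ≠ ⊤ := (ENNReal.div_lt_top hB hAtop).ne
  have hmark : ∀ s : Set ℝ, MeasurableSet s → (∀ x ∈ s, A ^ 2 ≤ x ^ 2) →
      ∫ x in s, f x ≤ B.toReal / A ^ 2 := by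
    intro s hs hsub
    have hμs : μ s ≤ B / ENNReal.ofReal (A ^ 2) := by
      have hsub' : s ⊆ {x : ℝ | ENNReal.ofReal (A ^ 2) ≤ ENNReal.ofReal (x ^ 2)} :=
        fun x hx => ENNReal.ofReal_le_ofReal (hsub x hx)
      have hmono := measure_mono (μ := μ) hsub'
      have hml := mul_meas_ge_le_lintegral₀ (μ := μ)
        ((measurable_id.pow_const 2).ennreal_ofReal.aemeasurable) (ENNReal.ofReal (A ^ 2))
      rw [ENNReal.le_div_iff_mul_le (Or.inl hAtop) (Or.inl ENNReal.ofReal_ne_top)]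
      calc μ s * ENNReal.ofReal (A ^ 2) = ENNReal.ofReal (A ^ 2) * μ s := mul_comm _ _
        _ ≤ ENNReal.ofReal (A ^ 2) *
            μ {x : ℝ | ENNReal.ofReal (A ^ 2) ≤ ENNReal.ofReal (x ^ 2)} :=
            mul_le_mul_right hmono _
        _ ≤ ∫⁻ x, ENNReal.ofReal (x ^ 2) ∂μ := hml
        _ ≤ B := hM
    have h1 : ∫ x in s, f x ≤ ∫ x in s, max (f x) 0 :=
      integral_mono hf.restrict hf.pos_part.restrict (fun x => le_max_left _ _)
    have h2 : ENNReal.ofReal (∫ x in s, max (f x) 0) = μ s := by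
      rw [MeasureTheory.ofReal_integral_eq_lintegral_ofReal hf.pos_part.restrict
        (Filter.Eventually.of_forall fun x => le_max_right _ _)]
      rw [hμ, withDensity_apply _ hs]
      exact lintegral_congr fun x => ofReal_max_zero' (f x)
    have h3 : (μ s).toReal ≤ (B / ENNReal.ofReal (A ^ 2)).toReal :=
      ENNReal.toReal_mono hdivtop hμs
    have h4 : (B / ENNReal.ofReal (A ^ 2)).toReal = B.toReal / A ^ 2 := by
      rw [ENNReal.toReal_div, ENNReal.toReal_ofReal hA2pos.le]
    have hnn : (0:ℝ) ≤ ∫ x in s, max (f x) 0 := integral_nonneg fun x => le_max_right _ _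
    have h5 := ENNReal.toReal_ofReal hnn
    rw [h2] at h5
    linarith
  have hup : τ ≤ ∫ x in Set.Iic A, f x := by
    have hcompl : (∫ x in Set.Iic A, f x) + ∫ x in Set.Ioi A, f x = 1 := by
      have := MeasureTheory.integral_add_compl (measurableSet_Iic (a := A)) hf
      rwa [Set.compl_Iic, hf1] at this
    have hIoi : ∫ x in Set.Ioi A, f x ≤ B.toReal / A ^ 2 :=
      hmark _ measurableSet_Ioi (fun x hx => by
        have hx' : A ≤ x := le_of_lt hx
        nlinarith)
    have hle : B.toReal / A ^ 2 ≤ 1 - τ := le_trans hkey.le (min_le_right _ _)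
    linarith
  have hlow : ∀ t ∈ {t : ℝ | τ ≤ ∫ x in Set.Iic t, f x}, -A ≤ t := by
    intro t ht
    by_contra hcon
    push_neg at hcon
    have hIic : ∫ x in Set.Iic t, f x ≤ B.toReal / A ^ 2 :=
      hmark _ measurableSet_Iic (fun x hx => by
        simp only [Set.mem_Iic] at hx
        nlinarith)
    have hlt : B.toReal / A ^ 2 < τ := lt_of_lt_of_le hkey (min_le_left _ _)
    have ht' : τ ≤ ∫ x in Set.Iic t, f x := ht
    linarith
  have hne : Set.Nonempty {t : ℝ | τ ≤ ∫ x in Set.Iic t, f x} := ⟨A, hup⟩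
  have hbdd : BddBelow {t : ℝ | τ ≤ ∫ x in Set.Iic t, f x} := ⟨-A, hlow⟩
  rw [abs_le]
  constructor
  · exact le_csInf hne hlow
  · exact csInf_le hbdd hup

theorem breakdown_posterior_quantile_ge
    (ρ w : ℝ → ℝ) (n : ℕ) (hn : 0 < n)
    (hwell : ∀ Y : Fin n → ℝ,
      Integrable (fun t : ℝ => w t * Real.exp (-∑ j, ρ (Y j - t))) ∧
      0 < ∫ t : ℝ, w t * Real.exp (-∑ j, ρ (Y j - t)) ∧
      Integrable (fun θ : ℝ => θ * locPostDensity ρ w Y θ) ∧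
      Integrable (fun θ : ℝ => θ ^ 2 * locPostDensity ρ w Y θ))
    (τ : ℝ) (hτ : τ ∈ Set.Ioo (0 : ℝ) 1)
    (X : Fin n → ℝ) (m : ℕ) (hm : m ≤ n)
    (hfin : supW2 ρ w X m ≠ ⊤) :
    ∃ C : ℝ, ∀ Y ∈ hammingBall X m,
      |postQuantile ρ w τ Y - postQuantile ρ w τ X| ≤ C := by
  classical
  have hmx : Measurable fun x : ℝ => ENNReal.ofReal (x ^ 2) := by
    exact (measurable_id.pow_const 2).ennreal_ofReal
  -- second moment of the reference posterior is finite
  have hM2X : (∫⁻ x, ENNReal.ofReal (x ^ 2) ∂(locPostMeasure ρ w X)) ≠ ⊤ := by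
    obtain ⟨hint, hpos, hm1, hm2⟩ := hwell X
    have haesm : AEStronglyMeasurable (locPostDensity ρ w X) volume := by
      unfold locPostDensity
      exact (hint.div_const _).aestronglyMeasurable
    have haem : AEMeasurable (fun θ => ENNReal.ofReal (locPostDensity ρ w X θ)) volume :=
      ENNReal.measurable_ofReal.comp_aemeasurable haesm.aemeasurable
    unfold locPostMeasure
    rw [lintegral_withDensity_eq_lintegral_mul₀ haem
      hmx.aemeasurable]
    have heq : ∀ x : ℝ,
        ((fun θ => ENNReal.ofReal (locPostDensity ρ w X θ)) *
          fun x => ENNReal.ofReal (x ^ 2)) x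
          = ENNReal.ofReal (x ^ 2 * locPostDensity ρ w X x) := by
      intro x
      simp only [Pi.mul_apply]
      rw [mul_comm, ← ENNReal.ofReal_mul (sq_nonneg x)]
    rw [lintegral_congr heq]
    exact hm2.lintegral_lt_top.ne
  set B : ℝ≥0∞ := 2 * ((supW2 ρ w X m) ^ 2 + 1)
      + 2 * ∫⁻ x, ENNReal.ofReal (x ^ 2) ∂(locPostMeasure ρ w X) with hB
  have hBne : B ≠ ⊤ := by
    rw [hB]
    refine ENNReal.add_ne_top.mpr ⟨?_, ?_⟩
    · exact ENNReal.mul_ne_top (by simp)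
        (ENNReal.add_ne_top.mpr ⟨ENNReal.pow_ne_top hfin, ENNReal.one_ne_top⟩)
    · exact ENNReal.mul_ne_top (by simp) hM2X
  -- uniform second moment bound on corrupted posteriors
  have key : ∀ Y ∈ hammingBall X m,
      (∫⁻ x, ENNReal.ofReal (x ^ 2) ∂(locPostMeasure ρ w Y)) ≤ B := by
    intro Y hY
    have hW : W2 (locPostMeasure ρ w Y) (locPostMeasure ρ w X) ≤ supW2 ρ w X m := by
      unfold supW2
      exact le_biSup (fun Z => W2 (locPostMeasure ρ w Z) (locPostMeasure ρ w X)) hY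
    set I := ⨅ (γ : Measure (ℝ × ℝ)) (_ : γ.map Prod.fst = locPostMeasure ρ w Y ∧
        γ.map Prod.snd = locPostMeasure ρ w X),
        ∫⁻ z, ENNReal.ofReal ((z.1 - z.2) ^ 2) ∂γ with hI
    have hWrw : W2 (locPostMeasure ρ w Y) (locPostMeasure ρ w X) = I ^ (1/2 : ℝ) := rfl
    have hIne : I ≠ ⊤ := by
      intro h
      rw [hWrw, h, ENNReal.top_rpow_of_pos (by norm_num)] at hW
      exact hfin (top_le_iff.mp hW)
    have hIle : I ≤ (supW2 ρ w X m) ^ 2 := by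
      calc I = (I ^ (1/2 : ℝ)) ^ (2 : ℝ) := by
            rw [← ENNReal.rpow_mul]
            norm_num
        _ ≤ (supW2 ρ w X m) ^ (2 : ℝ) := by
            rw [← hWrw]
            exact ENNReal.rpow_le_rpow hW (by norm_num)
        _ = (supW2 ρ w X m) ^ (2 : ℕ) := by
            rw [← ENNReal.rpow_natCast]
            norm_num
    have hIlt : I < (supW2 ρ w X m) ^ 2 + 1 :=
      lt_of_le_of_lt hIle (ENNReal.lt_add_right (ENNReal.pow_ne_top hfin) one_ne_zero)
    rw [hI, iInf_lt_iff] at hIlt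
    obtain ⟨γ, hγ⟩ := hIlt
    rw [iInf_lt_iff] at hγ
    obtain ⟨⟨hγ1, hγ2⟩, hcost⟩ := hγ
    have hmfst : Measurable fun z : ℝ × ℝ => ENNReal.ofReal (z.1 ^ 2) :=
      (measurable_fst.pow_const 2).ennreal_ofReal
    have hmsnd : Measurable fun z : ℝ × ℝ => ENNReal.ofReal (z.2 ^ 2) :=
      (measurable_snd.pow_const 2).ennreal_ofReal
    have hmdiff : Measurable fun z : ℝ × ℝ => ENNReal.ofReal ((z.1 - z.2) ^ 2) :=
      ((measurable_fst.sub measurable_snd).pow_const 2).ennreal_ofReal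
    have hfstI : (∫⁻ x, ENNReal.ofReal (x ^ 2) ∂(locPostMeasure ρ w Y))
        = ∫⁻ z, ENNReal.ofReal (z.1 ^ 2) ∂γ := by
      rw [← hγ1, lintegral_map (hmx) measurable_fst]
    have hsndI : (∫⁻ x, ENNReal.ofReal (x ^ 2) ∂(locPostMeasure ρ w X))
        = ∫⁻ z, ENNReal.ofReal (z.2 ^ 2) ∂γ := by
      rw [← hγ2, lintegral_map (hmx) measurable_snd]
    rw [hfstI]
    calc ∫⁻ z, ENNReal.ofReal (z.1 ^ 2) ∂γ
        ≤ ∫⁻ z, (2 * ENNReal.ofReal ((z.1 - z.2) ^ 2) + 2 * ENNReal.ofReal (z.2 ^ 2)) ∂γ := by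
          refine lintegral_mono fun z => ?_
          have h : z.1 ^ 2 ≤ 2 * (z.1 - z.2) ^ 2 + 2 * z.2 ^ 2 := by
            nlinarith [sq_nonneg (z.1 - 2 * z.2)]
          calc ENNReal.ofReal (z.1 ^ 2)
              ≤ ENNReal.ofReal (2 * (z.1 - z.2) ^ 2 + 2 * z.2 ^ 2) :=
                ENNReal.ofReal_le_ofReal h
            _ = 2 * ENNReal.ofReal ((z.1 - z.2) ^ 2) + 2 * ENNReal.ofReal (z.2 ^ 2) := by
                rw [ENNReal.ofReal_add (by positivity) (by positivity),
                  ENNReal.ofReal_mul (by norm_num), ENNReal.ofReal_mul (by norm_num),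
                  ENNReal.ofReal_ofNat]
      _ = 2 * (∫⁻ z, ENNReal.ofReal ((z.1 - z.2) ^ 2) ∂γ)
          + 2 * ∫⁻ z, ENNReal.ofReal (z.2 ^ 2) ∂γ := by
          rw [lintegral_add_left (hmdiff.const_mul 2), lintegral_const_mul 2 hmdiff,
            lintegral_const_mul 2 hmsnd]
      _ ≤ 2 * ((supW2 ρ w X m) ^ 2 + 1) + 2 * ∫⁻ z, ENNReal.ofReal (z.2 ^ 2) ∂γ :=
          add_le_add (mul_le_mul_right hcost.le 2) le_rfl
      _ = B := by rw [hB, ← hsndI]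
  -- uniform bound on quantiles
  have hq : ∀ Y ∈ hammingBall X m,
      |postQuantile ρ w τ Y| ≤ Real.sqrt (B.toReal / min τ (1 - τ)) + 1 := by
    intro Y hY
    obtain ⟨hint, hpos, hm1, hm2⟩ := hwell Y
    have hfint : Integrable (locPostDensity ρ w Y) := by
      unfold locPostDensity
      exact hint.div_const _
    have hf1 : (∫ θ, locPostDensity ρ w Y θ) = 1 := by
      unfold locPostDensity
      rw [integral_div]
      exact div_self hpos.ne'
    exact quantile_abs_le (locPostDensity ρ w Y) hfint hf1 τ hτ B hBne (key Y hY)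
  have hXmem : X ∈ hammingBall X m := by
    simp [hammingBall]
  refine ⟨2 * (Real.sqrt (B.toReal / min τ (1 - τ)) + 1), fun Y hY => ?_⟩
  have h1 := hq Y hY
  have h2 := hq X hXmem
  have h3 : |postQuantile ρ w τ Y - postQuantile ρ w τ X|
      ≤ |postQuantile ρ w τ Y| + |postQuantile ρ w τ X| := abs_sub _ _
  linarith
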